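/- The density h(x) = 1/x is invariant under the Rényi transfer operator: for every x ∈ (0,1), ∑_{n=1}^{∞} (1/(n+x)^2) · 1/(1 - 1/(n+x)) = 1/x. -/
import Mathlib


/-- The density `1/x` is invariant under the Rényi transfer operator:
`∑_{n≥1} (1/(n+x)²) · 1/(1 − 1/(n+x)) = 1/x` for `x ∈ (0,1)`. -/
theorem renyi_density_invariant (x : ℝ) (hx : x ∈ Set.Ioo (0 : ℝ) 1) :
    ∑' n : ℕ, (1 / ((n + 1 : ℝ) + x) ^ 2) * (1 / (1 - 1 / ((n + 1 : ℝ) + x)))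
      = 1 / x := by
  obtain ⟨hx0, hx1⟩ := hx
  have hpos : ∀ n : ℕ, (0 : ℝ) < (n : ℝ) + x := fun n => by positivity
  have hterm : ∀ n : ℕ,
      (1 / ((n + 1 : ℝ) + x) ^ 2) * (1 / (1 - 1 / ((n + 1 : ℝ) + x)))
        = 1 / ((n : ℝ) + x) - 1 / ((n + 1 : ℝ) + x) := by
    intro n
    have h1 : (0 : ℝ) < (n : ℝ) + x := hpos n
    have h2 : (0 : ℝ) < (n : ℝ) + 1 + x := by positivity
    have hsub : 1 - 1 / ((n + 1 : ℝ) + x) = ((n : ℝ) + x) / ((n + 1 : ℝ) + x) := by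
      field_simp
      ring
    rw [hsub]
    field_simp
    ring
  have hsum : HasSum (fun n : ℕ =>
      (1 / ((n + 1 : ℝ) + x) ^ 2) * (1 / (1 - 1 / ((n + 1 : ℝ) + x)))) (1 / x) := by
    have htel : HasSum (fun n : ℕ => 1 / ((n : ℝ) + x) - 1 / ((n + 1 : ℝ) + x)) (1 / x) := by
      rw [hasSum_iff_tendsto_nat_of_nonneg]
      · have heq : ∀ N : ℕ,
            (∑ i ∈ Finset.range N, (1 / ((i : ℝ) + x) - 1 / ((i + 1 : ℝ) + x)))
              = 1 / x - 1 / ((N : ℝ) + x) := by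
          intro N
          have := Finset.sum_range_sub' (fun i : ℕ => 1 / ((i : ℝ) + x)) N
          simpa [Nat.cast_add, Nat.cast_one, add_comm, add_left_comm, add_assoc] using this
        simp only [heq]
        have : Filter.Tendsto (fun N : ℕ => 1 / ((N : ℝ) + x)) Filter.atTop (nhds 0) := by
          simp only [one_div]
          exact (Filter.tendsto_atTop_add_const_right _ x
            tendsto_natCast_atTop_atTop).inv_tendsto_atTop
        simpa using Filter.Tendsto.sub (tendsto_const_nhds (x := 1 / x)) this
      · intro n
        have h1 := hpos n
        have h2 : (0 : ℝ) < (n : ℝ) + 1 + x := by positivity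
        have : (1 : ℝ) / ((n + 1 : ℝ) + x) ≤ 1 / ((n : ℝ) + x) := by
          apply one_div_le_one_div_of_le h1; linarith
        linarith
    exact htel.congr_fun fun n => hterm n
  exact hsum.tsum_eq
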